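/- For every positive integer n, W(n) = ∏_k ℓ_k^{∑_s Q(⌊n/ℓ_k^s⌋)}, where the product is over all k ≥ 1 and the inner sum is over all s ≥ 1 (all but finitely many factors equal 1). -/

import Mathlib

open Finset Filter Real

/-- `ell k` is the product of the first `k` primes, `ℓ_k = p_1 ⋯ p_k`. -/
noncomputable def ell (k : ℕ) : ℕ := ∏ i ∈ Finset.range k, Nat.nth Nat.Prime i

/-- `𝒬` is the set of positive integers expressible as `ℓ_1^{b_1} ⋯ ℓ_t^{b_t}`
for some `t ≥ 1` and non-negative integers `b_1, …, b_t`. -/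
def QSet : Set ℕ :=
  {q | ∃ t : ℕ, 1 ≤ t ∧ ∃ b : ℕ → ℕ, q = ∏ k ∈ Finset.range t, ell (k + 1) ^ b k}

/-- `Qfun n = |𝒬 ∩ [n]|`, the number of elements of `𝒬` that are at most `n`. -/
noncomputable def Qfun (n : ℕ) : ℕ := (QSet ∩ Set.Icc 1 n).ncard

open Classical in
/-- `W n = ∏_{m ∈ 𝒬 ∩ [n]} m`. -/
noncomputable def W (n : ℕ) : ℕ :=
  ∏ m ∈ (Finset.Icc 1 n).filter (· ∈ QSet), m


-- p notation
local notation "pp" => Nat.nth Nat.Prime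

lemma pp_prime (i : ℕ) : (pp i).Prime := Nat.prime_nth_prime i

lemma lt_pp (k : ℕ) : k < pp k := by
  induction k with
  | zero => exact (pp_prime 0).pos
  | succ k ih =>
    have : pp k < pp (k+1) := (Nat.nth_lt_nth Nat.infinite_setOf_prime).2 (Nat.lt_succ_self k)
    omega

lemma pp_inj : Function.Injective pp := fun i j h => by
  by_contra hne
  rcases Nat.lt_or_ge i j with h1 | h1
  · exact absurd h (Nat.ne_of_lt ((Nat.nth_lt_nth Nat.infinite_setOf_prime).2 h1))
  · have h1 : j < i := by omega
    exact absurd h.symm (Nat.ne_of_lt ((Nat.nth_lt_nth Nat.infinite_setOf_prime).2 h1))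

lemma ell_pos (k : ℕ) : 0 < ell k :=
  Finset.prod_pos fun i _ => (pp_prime i).pos

lemma two_pow_le_ell (k : ℕ) : 2 ^ k ≤ ell k := by
  have := Finset.pow_card_le_prod (Finset.range k) (fun i => pp i) 2
    (fun i _ => (pp_prime i).two_le)
  simpa [ell] using this

lemma ell_ne_zero (k : ℕ) : ell k ≠ 0 := (ell_pos k).ne'

lemma one_le_of_mem_QSet {q : ℕ} (hq : q ∈ QSet) : 1 ≤ q := by
  obtain ⟨t, _, b, rfl⟩ := hq
  exact Finset.prod_pos fun j _ => pow_pos (ell_pos _) _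

lemma QSet_ne_zero {q : ℕ} (hq : q ∈ QSet) : q ≠ 0 :=
  Nat.one_le_iff_ne_zero.1 (one_le_of_mem_QSet hq)

/-- extend a representation to length `T ≥ t` -/
lemma rep_extend (t T : ℕ) (hT : t ≤ T) (b : ℕ → ℕ) :
    ∏ j ∈ Finset.range t, ell (j+1) ^ b j
      = ∏ j ∈ Finset.range T, ell (j+1) ^ (if j < t then b j else 0) := by
  rw [← Finset.prod_subset (Finset.range_subset_range.2 hT)
      (fun j _ hj => by simp [Finset.mem_range.1, (by simpa using hj : ¬ j < t)])]
  exact Finset.prod_congr rfl fun j hj => by simp [Finset.mem_range.1 hj]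

lemma QSet_mul {q r : ℕ} (hq : q ∈ QSet) (hr : r ∈ QSet) : q * r ∈ QSet := by
  obtain ⟨t1, ht1, b1, rfl⟩ := hq
  obtain ⟨t2, ht2, b2, rfl⟩ := hr
  refine ⟨max t1 t2, le_trans ht1 (le_max_left _ _), 
    fun j => (if j < t1 then b1 j else 0) + (if j < t2 then b2 j else 0), ?_⟩
  rw [rep_extend t1 (max t1 t2) (le_max_left _ _) b1,
      rep_extend t2 (max t1 t2) (le_max_right _ _) b2,
      ← Finset.prod_mul_distrib]
  exact Finset.prod_congr rfl fun j _ => (pow_add _ _ _).symm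

lemma ell_pow_mem_QSet (k s : ℕ) : ell (k+1) ^ s ∈ QSet := by
  refine ⟨k+1, Nat.succ_le_succ (Nat.zero_le k), fun j => if j = k then s else 0, ?_⟩
  rw [Finset.prod_eq_single k (fun j _ hj => by simp [hj]) (by simp)]
  simp

lemma ell_factorization (k i : ℕ) :
    (ell k).factorization (pp i) = if i < k then 1 else 0 := by
  unfold ell
  rw [Nat.factorization_prod (fun x _ => (pp_prime x).ne_zero),
      Finsupp.finset_sum_apply]
  have : ∀ x ∈ Finset.range k, (pp x).factorization (pp i)
      = if x = i then 1 else 0 := by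
    intro x _
    rw [(pp_prime x).factorization, Finsupp.single_apply]
    congr 1
    simp [pp_inj.eq_iff]
  rw [Finset.sum_congr rfl this, Finset.sum_ite_eq' (Finset.range k) i (fun _ => 1)]
  simp [Finset.mem_range]

lemma rep_factorization (t : ℕ) (b : ℕ → ℕ) (i : ℕ) :
    (∏ j ∈ Finset.range t, ell (j+1) ^ b j).factorization (pp i)
      = ∑ j ∈ Finset.range t, if i ≤ j then b j else 0 := by
  rw [Nat.factorization_prod (fun j _ => pow_ne_zero _ (ell_ne_zero _)),
      Finsupp.finset_sum_apply]
  refine Finset.sum_congr rfl fun j hj => ?_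
  rw [Nat.factorization_pow, Finsupp.smul_apply, ell_factorization]
  rcases le_or_gt i j with h | h
  · rw [if_pos (Nat.lt_succ_of_le h), if_pos h]; simp
  · rw [if_neg (by omega), if_neg (by omega)]; simp

lemma fact_antitone {q : ℕ} (hq : q ∈ QSet) (k : ℕ) :
    q.factorization (pp (k+1)) ≤ q.factorization (pp k) := by
  obtain ⟨t, _, b, rfl⟩ := hq
  rw [rep_factorization, rep_factorization]
  exact Finset.sum_le_sum fun j _ => by split_ifs <;> omega

noncomputable def Ef (k m : ℕ) : ℕ :=
  m.factorization (pp k) - m.factorization (pp (k+1))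

lemma Ef_rep (t : ℕ) (b : ℕ → ℕ) (k : ℕ) :
    Ef k (∏ j ∈ Finset.range t, ell (j+1) ^ b j) = if k < t then b k else 0 := by
  unfold Ef
  rw [rep_factorization, rep_factorization]
  have h1 : ∀ j ∈ Finset.range t, (if k ≤ j then b j else 0)
      = (if k+1 ≤ j then b j else 0) + (if j = k then b j else 0) := by
    intro j _
    rcases eq_or_ne j k with rfl | hne
    · simp
    · simp only [if_neg hne, add_zero]
      split_ifs <;> omega
  rw [Finset.sum_congr rfl h1, Finset.sum_add_distrib,
      Finset.sum_ite_eq' (Finset.range t) k b, Nat.add_sub_cancel_left]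
  simp [Finset.mem_range]

lemma reconstruct {m n : ℕ} (hm : m ∈ QSet) (hmn : m ≤ n) :
    m = ∏ k ∈ Finset.range n, ell (k+1) ^ Ef k m := by
  have hEf0 : ∀ k, n ≤ k → Ef k m = 0 := by
    intro k hk
    have : m < pp k := lt_of_le_of_lt hmn (lt_of_le_of_lt hk (lt_pp k))
    simp [Ef, Nat.factorization_eq_zero_of_lt this]
  obtain ⟨t, ht, b, hrep⟩ := hm
  have hEf : ∀ k, Ef k m = if k < t then b k else 0 := fun k => by
    rw [hrep, Ef_rep]
  rcases le_or_gt t n with h | h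
  · calc m = ∏ j ∈ Finset.range t, ell (j+1) ^ b j := hrep
      _ = ∏ j ∈ Finset.range n, ell (j+1) ^ (if j < t then b j else 0) :=
          rep_extend t n h b
      _ = ∏ k ∈ Finset.range n, ell (k+1) ^ Ef k m :=
          Finset.prod_congr rfl fun k _ => by rw [hEf k]
  · calc m = ∏ j ∈ Finset.range t, ell (j+1) ^ b j := hrep
      _ = ∏ k ∈ Finset.range t, ell (k+1) ^ Ef k m :=
          Finset.prod_congr rfl fun k hk => by
            rw [hEf k, if_pos (Finset.mem_range.1 hk)]
      _ = ∏ k ∈ Finset.range n, ell (k+1) ^ Ef k m :=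
          (Finset.prod_subset (Finset.range_subset_range.2 h.le)
            (fun k _ hk => by
              rw [hEf0 k (by simpa using hk), pow_zero])).symm

lemma Ef_ge_iff {m k s : ℕ} (hm : m ∈ QSet) :
    s + 1 ≤ Ef k m ↔ ∃ q ∈ QSet, m = q * ell (k+1) ^ (s+1) := by
  constructor
  · intro h
    obtain ⟨t, ht, b, hrep⟩ := hm
    set T := max t (k+1) with hT
    have htT : t ≤ T := le_max_left _ _
    have hkT : k < T := lt_of_lt_of_le (Nat.lt_succ_self k) (le_max_right _ _)
    set b' : ℕ → ℕ := fun j => if j < t then b j else 0 with hb'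
    have hrep' : m = ∏ j ∈ Finset.range T, ell (j+1) ^ b' j := by
      rw [hrep, rep_extend t T htT b]
    have hEf : Ef k m = b' k := by rw [hrep', Ef_rep, if_pos hkT]
    refine ⟨∏ j ∈ Finset.range T, ell (j+1) ^ (if j = k then b' k - (s+1) else b' j),
      ⟨T, le_trans (Nat.succ_le_succ (Nat.zero_le k)) (le_max_right _ _), _, rfl⟩, ?_⟩
    have hcong : (∏ j ∈ (Finset.range T).erase k,
          ell (j+1) ^ (if j = k then b' k - (s+1) else b' j))
        = ∏ j ∈ (Finset.range T).erase k, ell (j+1) ^ b' j :=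
      Finset.prod_congr rfl fun j hj => by
        rw [if_neg (Finset.ne_of_mem_erase hj)]
    rw [hrep',
      ← Finset.mul_prod_erase _ (fun j => ell (j+1) ^ b' j) (Finset.mem_range.2 hkT),
      ← Finset.mul_prod_erase _
        (fun j => ell (j+1) ^ (if j = k then b' k - (s+1) else b' j))
        (Finset.mem_range.2 hkT),
      if_pos rfl, hcong, mul_right_comm, ← pow_add]
    congr 2
    omega
  · rintro ⟨q, hq, rfl⟩
    have hq0 : q ≠ 0 := QSet_ne_zero hq
    have hL : ell (k+1) ^ (s+1) ≠ 0 := pow_ne_zero _ (ell_ne_zero _)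
    have hmono := fact_antitone hq k
    have h1 : (ell (k+1)).factorization (pp k) = 1 := by
      have := ell_factorization (k+1) k; simpa using this
    have h2 : (ell (k+1)).factorization (pp (k+1)) = 0 := by
      have := ell_factorization (k+1) (k+1); simpa using this
    unfold Ef
    rw [Nat.factorization_mul hq0 hL, Nat.factorization_pow]
    simp only [Finsupp.add_apply, Finsupp.smul_apply, h1, h2, smul_eq_mul,
      Finsupp.coe_add, Finsupp.coe_smul, Pi.add_apply, Pi.smul_apply]
    omega

open Classical in
lemma Qfun_eq (r : ℕ) : Qfun r = ((Finset.Icc 1 r).filter (· ∈ QSet)).card := by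
  rw [Qfun, ← Set.ncard_coe_finset]
  congr 1
  ext m
  simp only [Set.mem_inter_iff, Set.mem_Icc, Finset.coe_filter, Set.mem_setOf_eq,
    Finset.mem_Icc]
  tauto

open Classical in
lemma count_eq (n k s : ℕ) :
    (((Finset.Icc 1 n).filter (· ∈ QSet)).filter (fun m => s + 1 ≤ Ef k m)).card
      = Qfun (n / ell (k+1) ^ (s+1)) := by
  rw [Qfun_eq]
  set L := ell (k+1) ^ (s+1) with hLdef
  have hLpos : 0 < L := pow_pos (ell_pos _) _
  refine (Finset.card_nbij (fun q => q * L) ?_ ?_ ?_).symm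
  · intro q hq
    simp only [Finset.mem_coe, Finset.mem_filter, Finset.mem_Icc] at hq ⊢
    obtain ⟨⟨h1, h2⟩, hQ⟩ := hq
    have hmem : q * L ∈ QSet := QSet_mul hQ (ell_pow_mem_QSet k (s+1))
    refine ⟨⟨⟨Nat.one_le_iff_ne_zero.2 (by positivity), ?_⟩, hmem⟩, ?_⟩
    · exact (Nat.le_div_iff_mul_le hLpos).1 h2
    · exact (Ef_ge_iff hmem).2 ⟨q, hQ, rfl⟩
  · intro a _ b _ h
    exact Nat.eq_of_mul_eq_mul_right hLpos h
  · intro m hm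
    simp only [Finset.coe_filter, Set.mem_setOf_eq, Finset.mem_Icc,
      Finset.mem_filter] at hm
    obtain ⟨⟨⟨h1, h2⟩, hQ⟩, hE⟩ := hm
    obtain ⟨q, hq, rfl⟩ := (Ef_ge_iff hQ).1 hE
    refine ⟨q, ?_, rfl⟩
    simp only [Finset.coe_filter, Set.mem_setOf_eq, Finset.mem_Icc]
    exact ⟨⟨one_le_of_mem_QSet hq, (Nat.le_div_iff_mul_le hLpos).2 h2⟩, hq⟩

open Classical in
lemma sum_Ef (n k : ℕ) :
    ∑ m ∈ (Finset.Icc 1 n).filter (· ∈ QSet), Ef k m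
      = ∑ s ∈ Finset.range n, Qfun (n / ell (k+1) ^ (s+1)) := by
  have key : ∀ m ∈ (Finset.Icc 1 n).filter (· ∈ QSet),
      Ef k m = ∑ s ∈ Finset.range n, if s + 1 ≤ Ef k m then 1 else 0 := by
    intro m hm
    simp only [Finset.mem_filter, Finset.mem_Icc] at hm
    have hle : Ef k m ≤ n := le_trans (Nat.sub_le _ _)
      (le_of_lt (lt_of_lt_of_le (Nat.factorization_lt _ (by omega)) hm.1.2))
    have hfil : (Finset.range n).filter (fun s => s + 1 ≤ Ef k m)
        = Finset.range (Ef k m) := by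
      ext s
      simp only [Finset.mem_filter, Finset.mem_range]
      omega
    rw [← Finset.sum_filter, hfil, Finset.sum_const, Finset.card_range,
      smul_eq_mul, mul_one]
  calc ∑ m ∈ (Finset.Icc 1 n).filter (· ∈ QSet), Ef k m
      = ∑ m ∈ (Finset.Icc 1 n).filter (· ∈ QSet),
          ∑ s ∈ Finset.range n, if s + 1 ≤ Ef k m then 1 else 0 :=
        Finset.sum_congr rfl key
    _ = ∑ s ∈ Finset.range n, ∑ m ∈ (Finset.Icc 1 n).filter (· ∈ QSet),
          if s + 1 ≤ Ef k m then 1 else 0 := Finset.sum_comm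
    _ = ∑ s ∈ Finset.range n, Qfun (n / ell (k+1) ^ (s+1)) := by
        refine Finset.sum_congr rfl fun s _ => ?_
        rw [← Finset.sum_filter, Finset.sum_const, smul_eq_mul, mul_one, count_eq]

lemma Qfun_zero : Qfun 0 = 0 := by
  have h : Set.Icc (1:ℕ) 0 = ∅ := Set.Icc_eq_empty (by omega)
  rw [Qfun, h, Set.inter_empty, Set.ncard_empty]

lemma Qfun_div_zero (n k s : ℕ) (h : n ≤ k ∨ n ≤ s) :
    Qfun (n / ell (k+1) ^ (s+1)) = 0 := by
  have h2 : (2:ℕ) ^ (k+1) ≤ ell (k+1) := two_pow_le_ell _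
  have hlt : n < ell (k+1) ^ (s+1) := by
    rcases h with h | h
    · calc n < 2 ^ n := Nat.lt_two_pow_self
        _ ≤ 2 ^ (k+1) := Nat.pow_le_pow_right (by norm_num) (by omega)
        _ ≤ ell (k+1) := h2
        _ ≤ ell (k+1) ^ (s+1) := Nat.le_self_pow (by omega) _
    · calc n < 2 ^ n := Nat.lt_two_pow_self
        _ ≤ 2 ^ (s+1) := Nat.pow_le_pow_right (by norm_num) (by omega)
        _ ≤ ell (k+1) ^ (s+1) := Nat.pow_le_pow_left (le_trans (Nat.one_lt_two_pow (by omega) : (2:ℕ)^1 ≤ 2^(k+1)) h2) _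
  rw [Nat.div_eq_of_lt hlt, Qfun_zero]

theorem W_recurrence (n : ℕ) (hn : 0 < n) :
    W n = ∏' k : ℕ, ell (k + 1) ^ (∑' s : ℕ, Qfun (n / ell (k + 1) ^ (s + 1))) := by
  classical
  have htsum : ∀ k, (∑' s : ℕ, Qfun (n / ell (k+1) ^ (s+1)))
      = ∑ s ∈ Finset.range n, Qfun (n / ell (k+1) ^ (s+1)) := fun k =>
    tsum_eq_sum fun s hs => Qfun_div_zero n k s (Or.inr (by simpa using hs))
  have hprod : (∏' k : ℕ, ell (k+1) ^ (∑' s : ℕ, Qfun (n / ell (k+1) ^ (s+1))))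
      = ∏ k ∈ Finset.range n, ell (k+1) ^ (∑' s : ℕ, Qfun (n / ell (k+1) ^ (s+1))) :=
    tprod_eq_prod fun k hk => by
      rw [htsum k, Finset.sum_eq_zero
        (fun s _ => Qfun_div_zero n k s (Or.inl (by simpa using hk))), pow_zero]
  rw [hprod]
  unfold W
  calc ∏ m ∈ (Finset.Icc 1 n).filter (· ∈ QSet), m
      = ∏ m ∈ (Finset.Icc 1 n).filter (· ∈ QSet),
          ∏ k ∈ Finset.range n, ell (k+1) ^ Ef k m := by
        refine Finset.prod_congr rfl fun m hm => ?_
        simp only [Finset.mem_filter, Finset.mem_Icc] at hm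
        exact reconstruct hm.2 hm.1.2
    _ = ∏ k ∈ Finset.range n, ∏ m ∈ (Finset.Icc 1 n).filter (· ∈ QSet),
          ell (k+1) ^ Ef k m := Finset.prod_comm
    _ = ∏ k ∈ Finset.range n, ell (k+1) ^ (∑ m ∈ (Finset.Icc 1 n).filter (· ∈ QSet), Ef k m) :=
        Finset.prod_congr rfl fun k _ => Finset.prod_pow_eq_pow_sum _ _ _
    _ = ∏ k ∈ Finset.range n, ell (k+1) ^ (∑' s : ℕ, Qfun (n / ell (k+1) ^ (s+1))) := by
        refine Finset.prod_congr rfl fun k _ => ?_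
        rw [sum_Ef, htsum k]
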